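/- Let φ be a subharmonic function on ℂ with Δφ a doubling measure, fix ζ ∈ ℂ, and for 0 < ε < 1 set φ_ε(w) = (|w−ζ|/ρ(ζ))^ε and Φ_ε(w) = (|B_{ρ(ζ)}|^{−1} χ_{B(0,ρ(ζ))} ∗ |∂φ_ε/∂w|²)(w), i.e. the average of |∂φ_ε/∂w|²(u) = (ε²/4) |u−ζ|^{2ε−2} ρ(ζ)^{−2ε} over the disk of radius ρ(ζ) centered at w. Then for every C > 0 there exists 0 < ε₀ < 1, depending only on C and the doubling constant of Δφ, such that Φ_ε(w) ≤ C ρ(w)^{−2} for all w ∈ ℂ whenever 0 < ε ≤ ε₀. -/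

import Mathlib

open MeasureTheory Metric Complex Filter
open scoped ENNReal NNReal

noncomputable section

/-- Pointwise Laplacian of a function on `ℂ ≃ ℝ²`. -/
def lap (f : ℂ → ℝ) (z : ℂ) : ℝ :=
  iteratedFDeriv ℝ 2 f z ![1, 1] + iteratedFDeriv ℝ 2 f z ![Complex.I, Complex.I]

/-- `φ` is subharmonic on `ℂ`: upper semicontinuous, locally integrable, and satisfies
the sub-mean value inequality on disks. -/
def Subharmonic (φ : ℂ → ℝ) : Prop :=
  UpperSemicontinuous φ ∧ LocallyIntegrable φ volume ∧
    ∀ z : ℂ, ∀ r : ℝ, 0 < r → φ z ≤ ⨍ w in ball z r, φ w ∂volume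

/-- `μ` is the distributional Laplacian of `φ`. -/
def IsLaplacianOf (μ : Measure ℂ) (φ : ℂ → ℝ) : Prop :=
  ∀ ψ : ℂ → ℝ, ContDiff ℝ (⊤ : ℕ∞) ψ → HasCompactSupport ψ →
    ∫ z : ℂ, lap ψ z * φ z = ∫ z : ℂ, ψ z ∂μ

/-- `μ` is doubling with doubling constant (at most) `Cd`. -/
def DoublingWith (μ : Measure ℂ) (Cd : ℝ) : Prop :=
  ∀ z : ℂ, ∀ r : ℝ, 0 < r → μ (ball z (2 * r)) ≤ ENNReal.ofReal Cd * μ (ball z r)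

/-- `ρ z` is the positive radius such that `μ (D(z, ρ z)) = 1`. -/
def IsRadiusFn (μ : Measure ℂ) (ρ : ℂ → ℝ) : Prop :=
  ∀ z : ℂ, 0 < ρ z ∧ μ (ball z (ρ z)) = 1

namespace AGBaux

open Real

variable {μ : Measure ℂ} {Cd : ℝ} {ρ : ℂ → ℝ}

lemma doubling_pow (hD : DoublingWith μ Cd) (x : ℂ) {r : ℝ} (hr : 0 < r) (m : ℕ) :
    μ (ball x (2 ^ m * r)) ≤ (ENNReal.ofReal Cd) ^ m * μ (ball x r) := by
  induction m with
  | zero => simp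
  | succ k ih =>
      have h2 : (2:ℝ) ^ (k+1) * r = 2 * (2 ^ k * r) := by ring
      have hk : 0 < (2:ℝ) ^ k * r := by positivity
      calc μ (ball x (2 ^ (k+1) * r)) = μ (ball x (2 * (2 ^ k * r))) := by rw [h2]
        _ ≤ ENNReal.ofReal Cd * μ (ball x (2 ^ k * r)) := hD x _ hk
        _ ≤ ENNReal.ofReal Cd * ((ENNReal.ofReal Cd) ^ k * μ (ball x r)) := by gcongr
        _ = (ENNReal.ofReal Cd) ^ (k+1) * μ (ball x r) := by ring

lemma one_le_c (hD : DoublingWith μ Cd) (hρ : IsRadiusFn μ ρ) : 1 ≤ ENNReal.ofReal Cd := by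
  obtain ⟨h0, h1⟩ := hρ 0
  have h2 : (2:ℝ) * (ρ 0 / 2) = ρ 0 := by ring
  have := hD 0 (ρ 0 / 2) (by linarith)
  rw [h2] at this
  have hle : μ (ball 0 (ρ 0 / 2)) ≤ 1 := h1 ▸ measure_mono (ball_subset_ball (by linarith))
  calc (1:ℝ≥0∞) = μ (ball 0 (ρ 0)) := h1.symm
    _ ≤ ENNReal.ofReal Cd * μ (ball 0 (ρ 0 / 2)) := this
    _ ≤ ENNReal.ofReal Cd * 1 := by gcongr
    _ = ENNReal.ofReal Cd := mul_one _

lemma reverse_step (hD : DoublingWith μ Cd) (h1 : 1 ≤ ENNReal.ofReal Cd)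
    (x : ℂ) {r : ℝ} (hr : 0 < r) :
    (1 + ((ENNReal.ofReal Cd) ^ 3)⁻¹) * μ (ball x r) ≤ μ (ball x (2 * r)) := by
  set c := ENNReal.ofReal Cd with hc
  have hc0 : c ≠ 0 := by intro h; rw [h] at h1; simp at h1
  have hctop : c ≠ ⊤ := ENNReal.ofReal_ne_top
  set y := x + ((3 * r / 2 : ℝ) : ℂ) with hy
  have hxy : dist x y = 3 * r / 2 := by
    rw [hy, dist_eq_norm]
    simp [Complex.norm_real]
    exact hr.le
  have hsub1 : ball x r ⊆ ball y (2 ^ 3 * (r / 2)) := by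
    intro u hu
    rw [mem_ball] at hu ⊢
    have := dist_triangle u x y
    rw [hxy] at this
    norm_num
    linarith
  have hA : μ (ball x r) ≤ c ^ 3 * μ (ball y (r / 2)) :=
    (measure_mono hsub1).trans (doubling_pow hD y (by linarith) 3)
  have hB : (c ^ 3)⁻¹ * μ (ball x r) ≤ μ (ball y (r / 2)) := by
    calc (c ^ 3)⁻¹ * μ (ball x r) ≤ (c ^ 3)⁻¹ * (c ^ 3 * μ (ball y (r / 2))) := by gcongr
      _ = μ (ball y (r / 2)) := by
          rw [← mul_assoc, ENNReal.inv_mul_cancel (pow_ne_zero _ hc0)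
            (ENNReal.pow_ne_top hctop), one_mul]
  have hdisj : Disjoint (ball x r) (ball y (r / 2)) := by
    rw [Set.disjoint_left]
    intro u hu1 hu2
    rw [mem_ball] at hu1 hu2
    have h3 := dist_triangle x u y
    rw [dist_comm x u] at h3
    linarith [hxy ▸ h3]
  have hsub2 : ball x r ∪ ball y (r / 2) ⊆ ball x (2 * r) := by
    rintro u (hu | hu) <;> rw [mem_ball] at hu ⊢
    · linarith
    · have := dist_triangle u y x
      rw [dist_comm y x] at this
      linarith [hxy ▸ this]
  calc (1 + (c ^ 3)⁻¹) * μ (ball x r)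
      = μ (ball x r) + (c ^ 3)⁻¹ * μ (ball x r) := by ring
    _ ≤ μ (ball x r) + μ (ball y (r / 2)) := by gcongr
    _ = μ (ball x r ∪ ball y (r / 2)) := (measure_union hdisj measurableSet_ball).symm
    _ ≤ μ (ball x (2 * r)) := measure_mono hsub2

lemma reverse_pow (hD : DoublingWith μ Cd) (h1 : 1 ≤ ENNReal.ofReal Cd)
    (x : ℂ) {r : ℝ} (hr : 0 < r) (n : ℕ) :
    (1 + ((ENNReal.ofReal Cd) ^ 3)⁻¹) ^ n * μ (ball x r) ≤ μ (ball x (2 ^ n * r)) := by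
  induction n with
  | zero => simp
  | succ k ih =>
      have h2 : (2:ℝ) ^ (k+1) * r = 2 * (2 ^ k * r) := by ring
      have hk : 0 < (2:ℝ) ^ k * r := by positivity
      calc (1 + ((ENNReal.ofReal Cd) ^ 3)⁻¹) ^ (k+1) * μ (ball x r)
          = (1 + ((ENNReal.ofReal Cd) ^ 3)⁻¹) * ((1 + ((ENNReal.ofReal Cd) ^ 3)⁻¹) ^ k * μ (ball x r)) := by ring
        _ ≤ (1 + ((ENNReal.ofReal Cd) ^ 3)⁻¹) * μ (ball x (2 ^ k * r)) := by gcongr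
        _ ≤ μ (ball x (2 * (2 ^ k * r))) := reverse_step hD h1 x hk
        _ = μ (ball x (2 ^ (k+1) * r)) := by rw [h2]

lemma key_ennreal (hD : DoublingWith μ Cd) (hρ : IsRadiusFn μ ρ) (h1 : 1 ≤ ENNReal.ofReal Cd)
    (w ζ : ℂ) (n m : ℕ) (h : ‖w - ζ‖ + 2 ^ n * ρ ζ ≤ 2 ^ m * ρ w) :
    (1 + ((ENNReal.ofReal Cd) ^ 3)⁻¹) ^ n ≤ (ENNReal.ofReal Cd) ^ m := by
  have hζ := (hρ ζ).1
  have hw := (hρ w).1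
  have hsub : ball ζ (2 ^ n * ρ ζ) ⊆ ball w (2 ^ m * ρ w) := by
    intro u hu
    rw [mem_ball] at hu ⊢
    have h3 : dist u w ≤ dist u ζ + dist ζ w := dist_triangle u ζ w
    have h4 : dist ζ w = ‖w - ζ‖ := by rw [dist_comm, dist_eq_norm]
    linarith
  calc (1 + ((ENNReal.ofReal Cd) ^ 3)⁻¹) ^ n
      = (1 + ((ENNReal.ofReal Cd) ^ 3)⁻¹) ^ n * μ (ball ζ (ρ ζ)) := by rw [(hρ ζ).2, mul_one]
    _ ≤ μ (ball ζ (2 ^ n * ρ ζ)) := reverse_pow hD h1 ζ hζ n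
    _ ≤ μ (ball w (2 ^ m * ρ w)) := measure_mono hsub
    _ ≤ (ENNReal.ofReal Cd) ^ m * μ (ball w (ρ w)) := doubling_pow hD w hw m
    _ = (ENNReal.ofReal Cd) ^ m := by rw [(hρ w).2, mul_one]

lemma c_inv_pow (hCd : 0 < Cd) :
    1 + ((ENNReal.ofReal Cd) ^ 3)⁻¹ = ENNReal.ofReal (1 + (Cd ^ 3)⁻¹) := by
  rw [ENNReal.ofReal_add zero_le_one (by positivity), ENNReal.ofReal_one,
    ← ENNReal.ofReal_pow hCd.le, ENNReal.ofReal_inv_of_pos (by positivity)]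

lemma key_real (hD : DoublingWith μ Cd) (hρ : IsRadiusFn μ ρ) (hCd : 1 ≤ Cd)
    (w ζ : ℂ) (n m : ℕ) (h : ‖w - ζ‖ + 2 ^ n * ρ ζ ≤ 2 ^ m * ρ w) :
    (1 + (Cd ^ 3)⁻¹) ^ n ≤ Cd ^ m := by
  have h0 : (0:ℝ) < Cd := lt_of_lt_of_le one_pos hCd
  have h1 : 1 ≤ ENNReal.ofReal Cd := ENNReal.one_le_ofReal.2 hCd
  have := key_ennreal hD hρ h1 w ζ n m h
  rw [c_inv_pow h0, ← ENNReal.ofReal_pow (by positivity), ← ENNReal.ofReal_pow h0.le,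
    ENNReal.ofReal_le_ofReal_iff (by positivity)] at this
  exact this

lemma one_lt_Cd (hD : DoublingWith μ Cd) (hρ : IsRadiusFn μ ρ) : 1 < Cd := by
  have h1 : 1 ≤ ENNReal.ofReal Cd := one_le_c hD hρ
  have hCd1 : 1 ≤ Cd := ENNReal.one_le_ofReal.1 h1
  have h0 : (0:ℝ) < Cd := lt_of_lt_of_le one_pos hCd1
  obtain ⟨hρ0, hμ0⟩ := hρ 0
  have h2 : (1 + ((ENNReal.ofReal Cd) ^ 3)⁻¹) * μ (ball 0 (ρ 0)) ≤ μ (ball 0 (2 * ρ 0)) :=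
    reverse_step hD h1 0 hρ0
  have h3 : μ (ball 0 (2 * ρ 0)) ≤ ENNReal.ofReal Cd * μ (ball 0 (ρ 0)) := hD 0 (ρ 0) hρ0
  rw [hμ0, mul_one] at h2 h3
  have h4 : ENNReal.ofReal (1 + (Cd ^ 3)⁻¹) ≤ ENNReal.ofReal Cd := by
    rw [← c_inv_pow h0]; exact h2.trans h3
  rw [ENNReal.ofReal_le_ofReal_iff h0.le] at h4
  have : (0:ℝ) < (Cd ^ 3)⁻¹ := by positivity
  linarith

/-- The key geometric estimate: `ρ w ≤ 10 ρ ζ T^(1-θ)`. -/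
lemma rho_bound (hD : DoublingWith μ Cd) (hρ : IsRadiusFn μ ρ) (hCd : 1 < Cd) (w ζ : ℂ) :
    ρ w ≤ 10 * ρ ζ * (1 + ‖w - ζ‖ / ρ ζ) ^
      (1 - Real.log (1 + (Cd ^ 3)⁻¹) / Real.log Cd) := by
  have hζ := (hρ ζ).1
  have hw := (hρ w).1
  have hCd0 : (0:ℝ) < Cd := lt_trans one_pos hCd
  have hlogb : 0 < Real.log Cd := Real.log_pos hCd
  have ha1 : (1:ℝ) < 1 + (Cd ^ 3)⁻¹ := by
    have : (0:ℝ) < (Cd ^ 3)⁻¹ := by positivity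
    linarith
  set θ := Real.log (1 + (Cd ^ 3)⁻¹) / Real.log Cd with hθdef
  have hθpos : 0 < θ := div_pos (Real.log_pos ha1) hlogb
  set T := 1 + ‖w - ζ‖ / ρ ζ with hTdef
  have hT1 : 1 ≤ T := le_add_of_nonneg_right (by positivity)
  have hT0 : 0 < T := lt_of_lt_of_le one_pos hT1
  set n := ⌈Real.logb 2 T⌉₊ + 1 with hn
  have hlogbT : 0 ≤ Real.logb 2 T := Real.logb_nonneg one_lt_two hT1
  have hnθ : 0 < (n:ℝ) * θ := by positivity
  set m := ⌈(n:ℝ) * θ⌉₊ - 1 with hm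
  have hceil1 : 1 ≤ ⌈(n:ℝ) * θ⌉₊ := Nat.one_le_iff_ne_zero.2 (by
    simp only [ne_eq, Nat.ceil_eq_zero, not_le]; exact hnθ)
  have hm1 : (m:ℝ) + 1 = (⌈(n:ℝ) * θ⌉₊ : ℝ) := by
    have : m + 1 = ⌈(n:ℝ) * θ⌉₊ := Nat.succ_pred_eq_of_pos hceil1
    exact_mod_cast congrArg (Nat.cast : ℕ → ℝ) this
  have hmlt : (m:ℝ) < (n:ℝ) * θ := by
    have := Nat.ceil_lt_add_one hnθ.le
    linarith
  have hmge : (n:ℝ) * θ ≤ (m:ℝ) + 1 := by rw [hm1]; exact Nat.le_ceil _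
  -- 2^n bounds
  have h2nT : T ≤ 2 ^ n := by
    have hle : Real.logb 2 T ≤ (n:ℝ) := by
      have := Nat.le_ceil (Real.logb 2 T)
      push_cast [hn]; push_cast at this; linarith
    calc T = 2 ^ Real.logb 2 T := (Real.rpow_logb two_pos (by norm_num) hT0).symm
      _ ≤ 2 ^ ((n:ℝ)) := Real.rpow_le_rpow_of_exponent_le one_le_two hle
      _ = 2 ^ n := Real.rpow_natCast 2 n
  have h2n4T : (2:ℝ) ^ n ≤ 4 * T := by
    have hle : (n:ℝ) ≤ Real.logb 2 T + 2 := by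
      have := Nat.ceil_lt_add_one hlogbT
      push_cast [hn]; linarith
    calc (2:ℝ) ^ n = 2 ^ ((n:ℝ)) := (Real.rpow_natCast 2 n).symm
      _ ≤ 2 ^ (Real.logb 2 T + 2) := Real.rpow_le_rpow_of_exponent_le one_le_two hle
      _ = 2 ^ Real.logb 2 T * 2 ^ (2:ℝ) := Real.rpow_add two_pos _ _
      _ = T * 4 := by
          rw [Real.rpow_logb two_pos (by norm_num) hT0]
          norm_num
      _ = 4 * T := mul_comm _ _
  -- the key inequality fails, so we get an upper bound on 2^m * ρ w
  have hkey : 2 ^ m * ρ w < ‖w - ζ‖ + 2 ^ n * ρ ζ := by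
    by_contra hcon
    push_neg at hcon
    have hge := key_real hD hρ hCd.le w ζ n m hcon
    have hlt : (Cd:ℝ) ^ m < (1 + (Cd ^ 3)⁻¹) ^ n := by
      have e1 : (Cd:ℝ) ^ m = Real.exp ((m:ℝ) * Real.log Cd) := by
        rw [← Real.rpow_natCast Cd m, Real.rpow_def_of_pos hCd0, mul_comm]
      have e2 : (1 + (Cd ^ 3)⁻¹) ^ n = Real.exp ((n:ℝ) * Real.log (1 + (Cd ^ 3)⁻¹)) := by
        rw [← Real.rpow_natCast _ n, Real.rpow_def_of_pos (by linarith), mul_comm]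
      rw [e1, e2]
      apply Real.exp_lt_exp.2
      have : (m:ℝ) * Real.log Cd < ((n:ℝ) * θ) * Real.log Cd := by
        exact mul_lt_mul_of_pos_right hmlt hlogb
      calc (m:ℝ) * Real.log Cd < ((n:ℝ) * θ) * Real.log Cd := this
        _ = (n:ℝ) * Real.log (1 + (Cd ^ 3)⁻¹) := by
            rw [hθdef]; field_simp
    exact absurd hge (not_le.2 hlt)
  -- conclude
  have hwT : ‖w - ζ‖ ≤ T * ρ ζ := by
    rw [hTdef]
    have : (1 + ‖w - ζ‖ / ρ ζ) * ρ ζ = ρ ζ + ‖w - ζ‖ := by field_simp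
    rw [this]; linarith [hζ.le]
  have h5T : 2 ^ m * ρ w ≤ 5 * T * ρ ζ := by
    have : (2:ℝ) ^ n * ρ ζ ≤ 4 * T * ρ ζ := by
      apply mul_le_mul_of_nonneg_right h2n4T hζ.le
    nlinarith [hkey]
  -- 2^m ≥ T^θ / 2
  have h2m : T ^ θ ≤ 2 * 2 ^ m := by
    calc T ^ θ ≤ ((2:ℝ) ^ n) ^ θ := Real.rpow_le_rpow hT0.le h2nT hθpos.le
      _ = 2 ^ ((n:ℝ) * θ) := by
          rw [← Real.rpow_natCast 2 n, ← Real.rpow_mul (by norm_num)]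
      _ ≤ 2 ^ ((m:ℝ) + 1) := Real.rpow_le_rpow_of_exponent_le one_le_two hmge
      _ = 2 ^ (m:ℝ) * 2 := by rw [Real.rpow_add two_pos, Real.rpow_one]
      _ = 2 * 2 ^ m := by rw [Real.rpow_natCast]; ring
  have hTθ0 : 0 < T ^ θ := Real.rpow_pos_of_pos hT0 _
  have h2m0 : (0:ℝ) < 2 ^ m := by positivity
  have hfinal : ρ w * T ^ θ ≤ 10 * T * ρ ζ := by
    calc ρ w * T ^ θ ≤ ρ w * (2 * 2 ^ m) := by
          apply mul_le_mul_of_nonneg_left h2m hw.le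
      _ = 2 * (2 ^ m * ρ w) := by ring
      _ ≤ 2 * (5 * T * ρ ζ) := by linarith [h5T]
      _ = 10 * T * ρ ζ := by ring
  have : ρ w ≤ 10 * T * ρ ζ / T ^ θ := by
    rw [le_div_iff₀ hTθ0]; exact hfinal
  calc ρ w ≤ 10 * T * ρ ζ / T ^ θ := this
    _ = 10 * ρ ζ * (T * (T ^ θ)⁻¹) := by ring
    _ = 10 * ρ ζ * T ^ (1 - θ) := by
        rw [Real.rpow_sub hT0, Real.rpow_one, div_eq_mul_inv]
    _ = 10 * ρ ζ * (1 + ‖w - ζ‖ / ρ ζ) ^ (1 - θ) := rfl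
lemma two_rpow_lower {ε : ℝ} (hε : 0 < ε) (hε1 : ε ≤ 1) :
    (2:ℝ) ^ (-(2*ε)) ≤ 1 - ε / 2 := by
  have hlog2 : (0.6931471803:ℝ) < Real.log 2 := Real.log_two_gt_d9
  have h1 : (2:ℝ) ^ (-(2*ε)) = Real.exp (-(2*ε) * Real.log 2) := by
    rw [Real.rpow_def_of_pos two_pos, mul_comm]
  have h2 : 1 + ε ≤ Real.exp (2*ε * Real.log 2) := by
    have h := Real.add_one_le_exp (2*ε*Real.log 2)
    nlinarith
  have h3 : Real.exp (-(2*ε)*Real.log 2) = (Real.exp (2*ε*Real.log 2))⁻¹ := by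
    rw [← Real.exp_neg]; ring_nf
  have hexp0 : (0:ℝ) < Real.exp (2*ε*Real.log 2) := Real.exp_pos _
  have h4 : (Real.exp (2*ε*Real.log 2))⁻¹ ≤ (1+ε)⁻¹ :=
    inv_anti₀ (by linarith) h2
  have h5 : (1+ε)⁻¹ ≤ 1 - ε/2 := by
    rw [← one_div, div_le_iff₀ (by linarith)]
    nlinarith
  rw [h1, h3]
  linarith

lemma f_measurable (ζ : ℂ) (p : ℝ) :
    Measurable (fun u : ℂ => ENNReal.ofReal (‖u - ζ‖ ^ p)) := by
  apply Measurable.ennreal_ofReal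
  exact (measurable_id.sub_const ζ).norm.pow measurable_const

lemma pi_enn : (NNReal.pi : ℝ≥0∞) = ENNReal.ofReal π := by
  rw [← NNReal.coe_real_pi, ENNReal.ofReal_coe_nnreal]

lemma annuli_lintegral (ζ : ℂ) {R ε : ℝ} (hR : 0 < R) (hε : 0 < ε) (hε1 : ε ≤ 1) :
    ∫⁻ u in ball ζ R, ENNReal.ofReal (‖u - ζ‖ ^ (2*ε - 2)) ∂volume
      ≤ ENNReal.ofReal (8 * π / ε * R ^ (2*ε)) := by
  set p := 2*ε - 2 with hp
  have hp0 : p ≤ 0 := by rw [hp]; linarith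
  set f : ℂ → ℝ≥0∞ := fun u => ENNReal.ofReal (‖u - ζ‖ ^ p) with hf
  set A : ℕ → Set ℂ := fun k => {u | R / 2 ^ (k+1) < ‖u - ζ‖ ∧ ‖u - ζ‖ ≤ R / 2 ^ k} with hA
  have hAm : ∀ k, MeasurableSet (A k) := by
    intro k
    have : A k = (fun u : ℂ => ‖u - ζ‖) ⁻¹' (Set.Ioc (R / 2 ^ (k+1)) (R / 2 ^ k)) := rfl
    rw [this]
    exact (measurable_id.sub_const ζ).norm measurableSet_Ioc
  have hcover : ball ζ R ⊆ {ζ} ∪ ⋃ k, A k := by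
    intro u hu
    rcases eq_or_ne u ζ with h | h
    · exact Or.inl (by simp [h])
    · have h0 : 0 < ‖u - ζ‖ := by rw [norm_pos_iff]; exact sub_ne_zero.2 h
      have hur : ‖u - ζ‖ < R := by rwa [mem_ball, dist_eq_norm] at hu
      have hq1 : 1 < R / ‖u - ζ‖ := (one_lt_div h0).2 hur
      have hq0 : 0 < R / ‖u - ζ‖ := by positivity
      set k := ⌊Real.logb 2 (R / ‖u - ζ‖)⌋₊ with hk
      have hlb0 : 0 ≤ Real.logb 2 (R / ‖u - ζ‖) := Real.logb_nonneg one_lt_two hq1.le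
      have h2p : (0:ℝ) < 2 ^ (k+1) := by positivity
      have h2p' : (0:ℝ) < 2 ^ k := by positivity
      refine Or.inr (Set.mem_iUnion.2 ⟨k, ?_, ?_⟩)
      · have h1 : Real.logb 2 (R / ‖u - ζ‖) < (k:ℝ) + 1 := by
          have := Nat.lt_floor_add_one (Real.logb 2 (R / ‖u - ζ‖))
          push_cast at this ⊢; linarith
        have hlt : R / ‖u - ζ‖ < 2 ^ (k+1) := by
          calc R / ‖u - ζ‖ = 2 ^ Real.logb 2 (R / ‖u - ζ‖) :=
                (Real.rpow_logb two_pos (by norm_num) hq0).symm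
            _ < 2 ^ ((k:ℝ) + 1) := Real.rpow_lt_rpow_of_exponent_lt one_lt_two h1
            _ = 2 ^ (k+1) := by
                rw [show ((k:ℝ) + 1) = ((k+1 : ℕ):ℝ) by push_cast; ring, Real.rpow_natCast]
        rw [div_lt_iff₀ h0] at hlt
        show R / 2 ^ (k+1) < ‖u - ζ‖
        rw [div_lt_iff₀ h2p]
        linarith [mul_comm ((2:ℝ)^(k+1)) ‖u - ζ‖]
      · have h1 : (k:ℝ) ≤ Real.logb 2 (R / ‖u - ζ‖) := Nat.floor_le hlb0
        have hle : (2:ℝ) ^ k ≤ R / ‖u - ζ‖ := by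
          calc (2:ℝ) ^ k = 2 ^ ((k:ℝ)) := (Real.rpow_natCast 2 k).symm
            _ ≤ 2 ^ Real.logb 2 (R / ‖u - ζ‖) := Real.rpow_le_rpow_of_exponent_le one_le_two h1
            _ = R / ‖u - ζ‖ := Real.rpow_logb two_pos (by norm_num) hq0
        rw [le_div_iff₀ h0] at hle
        show ‖u - ζ‖ ≤ R / 2 ^ k
        rw [le_div_iff₀ h2p']
        linarith [mul_comm ((2:ℝ)^k) ‖u - ζ‖]
  have hbound : ∀ k, ∫⁻ u in A k, f u ∂volume ≤
      ENNReal.ofReal ((R / 2 ^ (k+1)) ^ p) * volume (A k) := by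
    intro k
    have hmono : ∀ u ∈ A k, f u ≤ ENNReal.ofReal ((R / 2 ^ (k+1)) ^ p) := by
      intro u hu
      apply ENNReal.ofReal_le_ofReal
      exact Real.rpow_le_rpow_of_nonpos (by positivity) hu.1.le hp0
    calc ∫⁻ u in A k, f u ∂volume
        ≤ ∫⁻ _ in A k, ENNReal.ofReal ((R / 2 ^ (k+1)) ^ p) ∂volume :=
          setLIntegral_mono' (hAm k) hmono
      _ = ENNReal.ofReal ((R / 2 ^ (k+1)) ^ p) * volume (A k) := setLIntegral_const _ _
  have hvol : ∀ k, volume (A k) ≤ ENNReal.ofReal ((R / 2 ^ k) ^ 2 * π) := by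
    intro k
    have hsub : A k ⊆ closedBall ζ (R / 2 ^ k) := by
      intro u hu
      rw [mem_closedBall, dist_eq_norm]
      exact hu.2
    calc volume (A k) ≤ volume (closedBall ζ (R / 2 ^ k)) := measure_mono hsub
      _ = ENNReal.ofReal (R / 2 ^ k) ^ 2 * NNReal.pi := Complex.volume_closedBall _ _
      _ = ENNReal.ofReal ((R / 2 ^ k) ^ 2 * π) := by
          rw [ENNReal.ofReal_mul (by positivity), ← ENNReal.ofReal_pow (by positivity), pi_enn]
  have hterm : ∀ k, (R / 2 ^ (k+1)) ^ p * ((R / 2 ^ k) ^ 2 * π) ≤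
      (4 * π * R ^ (2*ε)) * ((2:ℝ) ^ (-(2*ε))) ^ k := by
    intro k
    have hBpos : (0:ℝ) < 2 ^ k := by positivity
    have hs : (0:ℝ) < R / 2 ^ k := by positivity
    have e1 : R / 2 ^ (k+1) = (R / 2 ^ k) / 2 := by rw [pow_succ]; ring
    have e2 : ((R / 2 ^ k) / 2) ^ p = (R / 2 ^ k) ^ p * (2:ℝ) ^ (-p) := by
      rw [Real.div_rpow hs.le (by norm_num : (0:ℝ) ≤ 2), Real.rpow_neg (by norm_num : (0:ℝ) ≤ 2),
        div_eq_mul_inv]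
    have e3 : (R / 2 ^ k) ^ p * (R / 2 ^ k) ^ (2:ℕ) = (R / 2 ^ k) ^ (2*ε) := by
      rw [← Real.rpow_natCast (R / 2 ^ k) 2, ← Real.rpow_add hs]
      norm_num [hp]
    have e4 : (R / 2 ^ k) ^ (2*ε) = R ^ (2*ε) * ((2:ℝ) ^ (-(2*ε))) ^ k := by
      rw [Real.div_rpow hR.le hBpos.le, div_eq_mul_inv]
      congr 1
      rw [← Real.rpow_natCast (2:ℝ) k, ← Real.rpow_mul (by norm_num : (0:ℝ) ≤ 2),
        ← Real.rpow_natCast ((2:ℝ) ^ (-(2*ε))) k, ← Real.rpow_mul (by norm_num : (0:ℝ) ≤ 2),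
        ← Real.rpow_neg (by norm_num : (0:ℝ) ≤ 2)]
      congr 1
      ring
    have h4 : (2:ℝ) ^ (-p) ≤ 4 := by
      have : (2:ℝ) ^ ((2:ℕ):ℝ) = 4 := by rw [Real.rpow_natCast]; norm_num
      calc (2:ℝ) ^ (-p) ≤ (2:ℝ) ^ ((2:ℕ):ℝ) :=
            Real.rpow_le_rpow_of_exponent_le one_le_two (by rw [hp]; push_cast; linarith)
        _ = 4 := this
    have hnn1 : (0:ℝ) ≤ R ^ (2*ε) := Real.rpow_nonneg hR.le _
    have hnn2 : (0:ℝ) ≤ ((2:ℝ) ^ (-(2*ε))) ^ k :=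
      pow_nonneg (Real.rpow_nonneg (by norm_num) _) _
    calc (R / 2 ^ (k+1)) ^ p * ((R / 2 ^ k) ^ 2 * π)
        = (2:ℝ) ^ (-p) * π * ((R / 2 ^ k) ^ p * (R / 2 ^ k) ^ (2:ℕ)) := by
          rw [e1, e2]; ring
      _ = (2:ℝ) ^ (-p) * π * (R ^ (2*ε) * ((2:ℝ) ^ (-(2*ε))) ^ k) := by rw [e3, e4]
      _ ≤ 4 * π * (R ^ (2*ε) * ((2:ℝ) ^ (-(2*ε))) ^ k) := by
          apply mul_le_mul_of_nonneg_right _ (by positivity)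
          apply mul_le_mul_of_nonneg_right h4 Real.pi_pos.le
      _ = (4 * π * R ^ (2*ε)) * ((2:ℝ) ^ (-(2*ε))) ^ k := by ring
  -- geometric series bound
  have hr01 : (0:ℝ) ≤ (2:ℝ) ^ (-(2*ε)) := Real.rpow_nonneg (by norm_num) _
  have hrlow := two_rpow_lower hε hε1
  have hinv : (1 - ENNReal.ofReal ((2:ℝ) ^ (-(2*ε))))⁻¹ ≤ ENNReal.ofReal (2 / ε) := by
    have hle : ENNReal.ofReal (ε/2) ≤ 1 - ENNReal.ofReal ((2:ℝ) ^ (-(2*ε))) := by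
      apply ENNReal.le_sub_of_add_le_left ENNReal.ofReal_ne_top
      rw [← ENNReal.ofReal_add hr01 (by linarith), ← ENNReal.ofReal_one]
      apply ENNReal.ofReal_le_ofReal
      linarith
    calc (1 - ENNReal.ofReal ((2:ℝ) ^ (-(2*ε))))⁻¹ ≤ (ENNReal.ofReal (ε/2))⁻¹ :=
          ENNReal.inv_le_inv' hle
      _ = ENNReal.ofReal ((ε/2)⁻¹) := (ENNReal.ofReal_inv_of_pos (by linarith)).symm
      _ = ENNReal.ofReal (2 / ε) := by rw [inv_div]
  have hsum : ∑' k, (ENNReal.ofReal ((R / 2 ^ (k+1)) ^ p) * volume (A k))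
      ≤ ENNReal.ofReal (8 * π / ε * R ^ (2*ε)) := by
    have hstep : ∀ k, ENNReal.ofReal ((R / 2 ^ (k+1)) ^ p) * volume (A k)
        ≤ ENNReal.ofReal (4 * π * R ^ (2*ε)) * (ENNReal.ofReal ((2:ℝ) ^ (-(2*ε)))) ^ k := by
      intro k
      calc ENNReal.ofReal ((R / 2 ^ (k+1)) ^ p) * volume (A k)
          ≤ ENNReal.ofReal ((R / 2 ^ (k+1)) ^ p) * ENNReal.ofReal ((R / 2 ^ k) ^ 2 * π) := by
            gcongr
            exact hvol k
        _ = ENNReal.ofReal ((R / 2 ^ (k+1)) ^ p * ((R / 2 ^ k) ^ 2 * π)) :=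
            (ENNReal.ofReal_mul (Real.rpow_nonneg (by positivity) _)).symm
        _ ≤ ENNReal.ofReal ((4 * π * R ^ (2*ε)) * ((2:ℝ) ^ (-(2*ε))) ^ k) :=
            ENNReal.ofReal_le_ofReal (hterm k)
        _ = ENNReal.ofReal (4 * π * R ^ (2*ε)) * (ENNReal.ofReal ((2:ℝ) ^ (-(2*ε)))) ^ k := by
            rw [ENNReal.ofReal_mul (by positivity), ENNReal.ofReal_pow hr01]
    calc ∑' k, (ENNReal.ofReal ((R / 2 ^ (k+1)) ^ p) * volume (A k))
        ≤ ∑' k, ENNReal.ofReal (4 * π * R ^ (2*ε)) * (ENNReal.ofReal ((2:ℝ) ^ (-(2*ε)))) ^ k :=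
          ENNReal.tsum_le_tsum hstep
      _ = ENNReal.ofReal (4 * π * R ^ (2*ε)) * ∑' k, (ENNReal.ofReal ((2:ℝ) ^ (-(2*ε)))) ^ k :=
          ENNReal.tsum_mul_left
      _ = ENNReal.ofReal (4 * π * R ^ (2*ε)) * (1 - ENNReal.ofReal ((2:ℝ) ^ (-(2*ε))))⁻¹ := by
          rw [ENNReal.tsum_geometric]
      _ ≤ ENNReal.ofReal (4 * π * R ^ (2*ε)) * ENNReal.ofReal (2 / ε) := by
          gcongr
      _ = ENNReal.ofReal ((4 * π * R ^ (2*ε)) * (2 / ε)) :=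
          (ENNReal.ofReal_mul (by positivity)).symm
      _ = ENNReal.ofReal (8 * π / ε * R ^ (2*ε)) := by
          congr 1
          ring
  calc ∫⁻ u in ball ζ R, f u ∂volume
      ≤ ∫⁻ u in {ζ} ∪ ⋃ k, A k, f u ∂volume := lintegral_mono_set hcover
    _ ≤ ∫⁻ u in {ζ}, f u ∂volume + ∫⁻ u in ⋃ k, A k, f u ∂volume := lintegral_union_le _ _ _
    _ ≤ ∑' k, ∫⁻ u in A k, f u ∂volume := by
        rw [setLIntegral_measure_zero _ _ (measure_singleton ζ), zero_add]
        exact lintegral_iUnion_le _ _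
    _ ≤ ∑' k, (ENNReal.ofReal ((R / 2 ^ (k+1)) ^ p) * volume (A k)) :=
        ENNReal.tsum_le_tsum hbound
    _ ≤ ENNReal.ofReal (8 * π / ε * R ^ (2*ε)) := hsum

lemma inv_mul_helper {a b : ℝ} (c : ℝ) (ha : a ≠ 0) (hb : b ≠ 0) :
    (a * b)⁻¹ * (c * a) = c / b := by
  field_simp

end AGBaux

set_option maxHeartbeats 2000000 in
open Real in
/-- Lemma 13: for every `C > 0` there is `0 < ε₀ < 1`, depending only
on `C` and the doubling constant of `Δφ`, such that for all `0 < ε ≤ ε₀` the average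
`Φ_ε(w)` of `|∂φ_ε/∂w|²(u) = (ε²/4)|u-ζ|^{2ε-2} ρ(ζ)^{-2ε}` over the disk
`D(w, ρ(ζ))` satisfies `Φ_ε(w) ≤ C ρ(w)⁻²` for all `w`. -/
theorem averaged_gradient_bound :
    ∀ Cd C : ℝ, 0 < C → ∃ ε₀ : ℝ, 0 < ε₀ ∧ ε₀ < 1 ∧
      ∀ (φ : ℂ → ℝ) (μ : Measure ℂ) (ρ : ℂ → ℝ),
        Subharmonic φ → IsLaplacianOf μ φ → DoublingWith μ Cd → IsRadiusFn μ ρ →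
        ∀ ζ : ℂ, ∀ ε : ℝ, 0 < ε → ε ≤ ε₀ → ∀ w : ℂ,
          (π * ρ ζ ^ 2)⁻¹ *
              ∫ u in ball w (ρ ζ),
                ε ^ 2 / 4 * ‖u - ζ‖ ^ (2 * ε - 2) * ρ ζ ^ (-(2 * ε)) ∂volume ≤
            C / ρ w ^ 2 := by
  intro Cd C hC
  set θ' : ℝ := if 1 < Cd then Real.log (1 + (Cd ^ 3)⁻¹) / Real.log Cd else 1 with hθ'def
  have hθ'pos : 0 < θ' := by
    rw [hθ'def]; split_ifs with h
    · have h1 : (0:ℝ) < (Cd ^ 3)⁻¹ := by positivity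
      exact div_pos (Real.log_pos (by linarith)) (Real.log_pos h)
    · norm_num
  refine ⟨min θ' (min (1/2) (C / 16200)), ?_, ?_, ?_⟩
  · have : (0:ℝ) < min (1/2) (C / 16200) := lt_min (by norm_num) (by positivity)
    exact lt_min hθ'pos this
  · calc min θ' (min (1/2) (C/16200)) ≤ min (1/2) (C/16200) := min_le_right _ _
      _ ≤ 1/2 := min_le_left _ _
      _ < 1 := by norm_num
  intro φ μ ρ hφ hL hD hρ ζ ε hε hεle w
  have hεθ' : ε ≤ θ' := hεle.trans (min_le_left _ _)
  have hεhalf : ε ≤ 1/2 := hεle.trans ((min_le_right _ _).trans (min_le_left _ _))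
  have hεC : ε ≤ C / 16200 := hεle.trans ((min_le_right _ _).trans (min_le_right _ _))
  have hε1 : ε ≤ 1 := by linarith
  have hCd : 1 < Cd := AGBaux.one_lt_Cd hD hρ
  set θ := Real.log (1 + (Cd ^ 3)⁻¹) / Real.log Cd with hθdef
  have hεθ : ε ≤ θ := by rwa [hθ'def, if_pos hCd] at hεθ'
  have hθpos : 0 < θ := lt_of_lt_of_le hε hεθ
  have hζ := (hρ ζ).1
  have hw := (hρ w).1
  set p := 2 * ε - 2 with hp
  have hp0 : p ≤ 0 := by rw [hp]; linarith
  set K := ε ^ 2 / 4 * ρ ζ ^ (-(2 * ε)) with hK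
  have hKnn : 0 ≤ K := by rw [hK]; positivity
  set I := ∫ u in ball w (ρ ζ),
      ε ^ 2 / 4 * ‖u - ζ‖ ^ (2 * ε - 2) * ρ ζ ^ (-(2 * ε)) ∂volume with hIdef
  have hgm : AEStronglyMeasurable
      (fun u : ℂ => ε ^ 2 / 4 * ‖u - ζ‖ ^ (2 * ε - 2) * ρ ζ ^ (-(2 * ε)))
      (volume.restrict (ball w (ρ ζ))) := by
    apply Measurable.aestronglyMeasurable
    exact (((measurable_id.sub_const ζ).norm.pow measurable_const).const_mul _).mul_const _
  have hI : I = (∫⁻ u in ball w (ρ ζ),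
      ENNReal.ofReal (ε ^ 2 / 4 * ‖u - ζ‖ ^ (2 * ε - 2) * ρ ζ ^ (-(2 * ε))) ∂volume).toReal :=
    integral_eq_lintegral_of_nonneg_ae
      (Filter.Eventually.of_forall (fun u => by positivity)) hgm
  have hgof : ∀ u : ℂ, ENNReal.ofReal (ε ^ 2 / 4 * ‖u - ζ‖ ^ (2 * ε - 2) * ρ ζ ^ (-(2 * ε)))
      = ENNReal.ofReal K * ENNReal.ofReal (‖u - ζ‖ ^ p) := by
    intro u
    rw [← ENNReal.ofReal_mul hKnn, hK, hp]
    congr 1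
    ring
  have hlin : (∫⁻ u in ball w (ρ ζ),
      ENNReal.ofReal (ε ^ 2 / 4 * ‖u - ζ‖ ^ (2 * ε - 2) * ρ ζ ^ (-(2 * ε))) ∂volume)
      = ENNReal.ofReal K * ∫⁻ u in ball w (ρ ζ), ENNReal.ofReal (‖u - ζ‖ ^ p) ∂volume := by
    simp_rw [hgof]
    exact lintegral_const_mul' _ _ ENNReal.ofReal_ne_top
  have hπ := Real.pi_pos
  have h10 := AGBaux.rho_bound hD hρ hCd w ζ
  rw [← hθdef] at h10
  have hT1 : (1:ℝ) ≤ 1 + ‖w - ζ‖ / ρ ζ := le_add_of_nonneg_right (by positivity)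
  rcases le_or_gt (‖w - ζ‖) (2 * ρ ζ) with hcase | hcase
  · -- Case A : w close to ζ
    have hsub : ball w (ρ ζ) ⊆ ball ζ (3 * ρ ζ) := by
      intro u hu
      rw [mem_ball] at hu ⊢
      have h3 := dist_triangle u w ζ
      have h4 : dist w ζ = ‖w - ζ‖ := dist_eq_norm w ζ
      linarith
    have hlint2 : (∫⁻ u in ball w (ρ ζ), ENNReal.ofReal (‖u - ζ‖ ^ p) ∂volume)
        ≤ ENNReal.ofReal (8 * π / ε * (3 * ρ ζ) ^ (2 * ε)) := by
      refine le_trans (lintegral_mono_set hsub) ?_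
      rw [hp]
      exact AGBaux.annuli_lintegral ζ (by linarith) hε hε1
    have hb : K * (8 * π / ε * (3 * ρ ζ) ^ (2 * ε)) ≤ 18 * π * ε := by
      have e1 : (3 * ρ ζ) ^ (2 * ε) = 3 ^ (2 * ε) * ρ ζ ^ (2 * ε) :=
        Real.mul_rpow (by norm_num) hζ.le
      have e2 : ρ ζ ^ (-(2 * ε)) * ρ ζ ^ (2 * ε) = 1 := by
        rw [← Real.rpow_add hζ]; norm_num
      have e3 : (3:ℝ) ^ (2 * ε) ≤ 9 := by
        have h9 : (3:ℝ) ^ ((2:ℕ):ℝ) = 9 := by rw [Real.rpow_natCast]; norm_num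
        calc (3:ℝ) ^ (2 * ε) ≤ 3 ^ ((2:ℕ):ℝ) :=
              Real.rpow_le_rpow_of_exponent_le (by norm_num) (by push_cast; linarith)
          _ = 9 := h9
      have e4 : (0:ℝ) ≤ (3:ℝ) ^ (2 * ε) := Real.rpow_nonneg (by norm_num) _
      calc K * (8 * π / ε * (3 * ρ ζ) ^ (2 * ε))
          = 2 * ε * π * (3:ℝ) ^ (2 * ε) * (ρ ζ ^ (-(2 * ε)) * ρ ζ ^ (2 * ε)) := by
            rw [hK, e1]; field_simp; ring
        _ = 2 * ε * π * (3:ℝ) ^ (2 * ε) := by rw [e2, mul_one]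
        _ ≤ 2 * ε * π * 9 := mul_le_mul_of_nonneg_left e3 (mul_nonneg (by linarith) hπ.le)
        _ = 18 * π * ε := by ring
    have hIle : I ≤ 18 * π * ε := by
      rw [hI]
      apply ENNReal.toReal_le_of_le_ofReal (mul_nonneg (by positivity) hε.le)
      rw [hlin]
      calc ENNReal.ofReal K * ∫⁻ u in ball w (ρ ζ), ENNReal.ofReal (‖u - ζ‖ ^ p) ∂volume
          ≤ ENNReal.ofReal K * ENNReal.ofReal (8 * π / ε * (3 * ρ ζ) ^ (2 * ε)) := by
            gcongr
        _ = ENNReal.ofReal (K * (8 * π / ε * (3 * ρ ζ) ^ (2 * ε))) :=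
            (ENNReal.ofReal_mul hKnn).symm
        _ ≤ ENNReal.ofReal (18 * π * ε) := ENNReal.ofReal_le_ofReal hb
    have hρw : ρ w ≤ 30 * ρ ζ := by
      have hT3 : 1 + ‖w - ζ‖ / ρ ζ ≤ 3 := by
        have : ‖w - ζ‖ / ρ ζ ≤ 2 := by rw [div_le_iff₀ hζ]; linarith
        linarith
      have hexp : (1 + ‖w - ζ‖ / ρ ζ) ^ (1 - θ) ≤ 3 := by
        calc (1 + ‖w - ζ‖ / ρ ζ) ^ (1 - θ) ≤ (1 + ‖w - ζ‖ / ρ ζ) ^ (1:ℝ) :=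
              Real.rpow_le_rpow_of_exponent_le hT1 (by linarith)
          _ = 1 + ‖w - ζ‖ / ρ ζ := Real.rpow_one _
          _ ≤ 3 := hT3
      calc ρ w ≤ 10 * ρ ζ * (1 + ‖w - ζ‖ / ρ ζ) ^ (1 - θ) := h10
        _ ≤ 10 * ρ ζ * 3 := by
            apply mul_le_mul_of_nonneg_left hexp (by linarith)
        _ = 30 * ρ ζ := by ring
    calc (π * ρ ζ ^ 2)⁻¹ * I ≤ (π * ρ ζ ^ 2)⁻¹ * (18 * π * ε) :=
          mul_le_mul_of_nonneg_left hIle (by positivity)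
      _ = (π * ρ ζ ^ 2)⁻¹ * (18 * ε * π) := by ring
      _ = 18 * ε / ρ ζ ^ 2 := AGBaux.inv_mul_helper _ hπ.ne' (pow_ne_zero 2 hζ.ne')
      _ ≤ C / ρ w ^ 2 := by
          rw [div_le_div_iff₀ (pow_pos hζ 2) (pow_pos hw 2)]
          have hsq : ρ w ^ 2 ≤ 900 * ρ ζ ^ 2 := by
            have h8 := pow_le_pow_left₀ hw.le hρw 2
            calc ρ w ^ 2 ≤ (30 * ρ ζ) ^ 2 := h8
              _ = 900 * ρ ζ ^ 2 := by ring
          have hA1 : 18 * ε * ρ w ^ 2 ≤ 18 * ε * (900 * ρ ζ ^ 2) :=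
            mul_le_mul_of_nonneg_left hsq (by linarith)
          have hA2 : 16200 * ε ≤ C := by
            rw [le_div_iff₀ (by norm_num : (0:ℝ) < 16200)] at hεC
            linarith
          have hA3 : 16200 * ε * ρ ζ ^ 2 ≤ C * ρ ζ ^ 2 :=
            mul_le_mul_of_nonneg_right hA2 (sq_nonneg _)
          nlinarith [hA1, hA3]
  · -- Case B : w far from ζ
    set τ := ‖w - ζ‖ / (2 * ρ ζ) with hτdef
    have hτ1 : 1 ≤ τ := by rw [hτdef, le_div_iff₀ (by positivity)]; linarith
    have hτ0 : 0 < τ := lt_of_lt_of_le one_pos hτ1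
    have hτρ : ‖w - ζ‖ = 2 * τ * ρ ζ := by rw [hτdef]; field_simp
    have hlow : ∀ u ∈ ball w (ρ ζ), τ * ρ ζ ≤ ‖u - ζ‖ := by
      intro u hu
      rw [mem_ball, dist_eq_norm] at hu
      have h1 : ‖w - ζ‖ ≤ ‖w - u‖ + ‖u - ζ‖ := by
        have h2 := norm_add_le (w - u) (u - ζ)
        have h3 : (w - u) + (u - ζ) = w - ζ := by ring
        rwa [h3] at h2
      have h4 : ‖u - w‖ = ‖w - u‖ := norm_sub_rev u w
      have h5 : ρ ζ ≤ τ * ρ ζ := le_mul_of_one_le_left hζ.le hτ1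
      have h6 : 2 * τ * ρ ζ ≤ ‖w - u‖ + ‖u - ζ‖ := by rw [← hτρ]; exact h1
      linarith
    have hptwise : ∀ u ∈ ball w (ρ ζ),
        ENNReal.ofReal (‖u - ζ‖ ^ p) ≤ ENNReal.ofReal ((τ * ρ ζ) ^ p) := by
      intro u hu
      exact ENNReal.ofReal_le_ofReal
        (Real.rpow_le_rpow_of_nonpos (mul_pos hτ0 hζ) (hlow u hu) hp0)
    have hlint2 : (∫⁻ u in ball w (ρ ζ), ENNReal.ofReal (‖u - ζ‖ ^ p) ∂volume)
        ≤ ENNReal.ofReal ((τ * ρ ζ) ^ p * (ρ ζ ^ 2 * π)) := by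
      calc (∫⁻ u in ball w (ρ ζ), ENNReal.ofReal (‖u - ζ‖ ^ p) ∂volume)
          ≤ ∫⁻ _ in ball w (ρ ζ), ENNReal.ofReal ((τ * ρ ζ) ^ p) ∂volume :=
            setLIntegral_mono' measurableSet_ball hptwise
        _ = ENNReal.ofReal ((τ * ρ ζ) ^ p) * volume (ball w (ρ ζ)) := setLIntegral_const _ _
        _ = ENNReal.ofReal ((τ * ρ ζ) ^ p) * ENNReal.ofReal (ρ ζ ^ 2 * π) := by
            rw [Complex.volume_ball, ENNReal.ofReal_mul (by positivity),
              ← ENNReal.ofReal_pow hζ.le, AGBaux.pi_enn]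
        _ = ENNReal.ofReal ((τ * ρ ζ) ^ p * (ρ ζ ^ 2 * π)) :=
            (ENNReal.ofReal_mul (Real.rpow_nonneg (by positivity) _)).symm
    have hbeq : K * ((τ * ρ ζ) ^ p * (ρ ζ ^ 2 * π)) = ε ^ 2 * π / 4 * τ ^ p := by
      have e1 : (τ * ρ ζ) ^ p = τ ^ p * ρ ζ ^ p := Real.mul_rpow hτ0.le hζ.le
      have e2 : ρ ζ ^ (-(2 * ε)) * ρ ζ ^ p = (ρ ζ ^ 2)⁻¹ := by
        rw [← Real.rpow_add hζ, show -(2 * ε) + p = -((2:ℕ):ℝ) by rw [hp]; push_cast; ring,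
          Real.rpow_neg hζ.le, Real.rpow_natCast]
      rw [hK, e1]
      have e3 : ε ^ 2 / 4 * ρ ζ ^ (-(2 * ε)) * (τ ^ p * ρ ζ ^ p * (ρ ζ ^ 2 * π))
          = (ε ^ 2 * π / 4 * τ ^ p) * ((ρ ζ ^ (-(2 * ε)) * ρ ζ ^ p) * ρ ζ ^ 2) := by ring
      rw [e3, e2, inv_mul_cancel₀ (pow_ne_zero 2 hζ.ne'), mul_one]
    have hτpnn : (0:ℝ) ≤ τ ^ p := Real.rpow_nonneg hτ0.le _
    have hIle : I ≤ ε ^ 2 * π / 4 * τ ^ p := by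
      rw [hI]
      apply ENNReal.toReal_le_of_le_ofReal (mul_nonneg (by positivity) hτpnn)
      rw [hlin]
      calc ENNReal.ofReal K * ∫⁻ u in ball w (ρ ζ), ENNReal.ofReal (‖u - ζ‖ ^ p) ∂volume
          ≤ ENNReal.ofReal K * ENNReal.ofReal ((τ * ρ ζ) ^ p * (ρ ζ ^ 2 * π)) := by gcongr
        _ = ENNReal.ofReal (K * ((τ * ρ ζ) ^ p * (ρ ζ ^ 2 * π))) :=
            (ENNReal.ofReal_mul hKnn).symm
        _ = ENNReal.ofReal (ε ^ 2 * π / 4 * τ ^ p) := by rw [hbeq]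
    have hρwB : ρ w ≤ 30 * ρ ζ * τ ^ (1 - ε) := by
      have hTτ : 1 + ‖w - ζ‖ / ρ ζ ≤ 3 * τ := by
        have h6 : ‖w - ζ‖ / ρ ζ = 2 * τ := by rw [hτρ]; field_simp
        rw [h6]; linarith
      have hq0 : (0:ℝ) ≤ 1 - ε := by linarith
      calc ρ w ≤ 10 * ρ ζ * (1 + ‖w - ζ‖ / ρ ζ) ^ (1 - θ) := h10
        _ ≤ 10 * ρ ζ * (1 + ‖w - ζ‖ / ρ ζ) ^ (1 - ε) := by
            apply mul_le_mul_of_nonneg_left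
              (Real.rpow_le_rpow_of_exponent_le hT1 (by linarith)) (by linarith)
        _ ≤ 10 * ρ ζ * (3 * τ) ^ (1 - ε) := by
            apply mul_le_mul_of_nonneg_left
              (Real.rpow_le_rpow (by linarith) hTτ hq0) (by linarith)
        _ = 10 * ρ ζ * (3 ^ (1 - ε) * τ ^ (1 - ε)) := by
            rw [Real.mul_rpow (by norm_num) hτ0.le]
        _ ≤ 10 * ρ ζ * (3 * τ ^ (1 - ε)) := by
            have h3 : (3:ℝ) ^ (1 - ε) ≤ 3 := by
              calc (3:ℝ) ^ (1 - ε) ≤ 3 ^ (1:ℝ) :=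
                    Real.rpow_le_rpow_of_exponent_le (by norm_num) (by linarith)
                _ = 3 := Real.rpow_one 3
            have h7 : (0:ℝ) ≤ τ ^ (1 - ε) := Real.rpow_nonneg hτ0.le _
            apply mul_le_mul_of_nonneg_left _ (by linarith : (0:ℝ) ≤ 10 * ρ ζ)
            nlinarith
        _ = 30 * ρ ζ * τ ^ (1 - ε) := by ring
    have hsq : ρ w ^ 2 ≤ 900 * ρ ζ ^ 2 * τ ^ (2 - 2 * ε) := by
      have h2 : (τ ^ (1 - ε)) ^ (2:ℕ) = τ ^ (2 - 2 * ε) := by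
        rw [← Real.rpow_natCast (τ ^ (1 - ε)) 2, ← Real.rpow_mul hτ0.le]
        norm_num
        ring_nf
      have h8 : ρ w ^ 2 ≤ (30 * ρ ζ * τ ^ (1 - ε)) ^ 2 :=
        pow_le_pow_left₀ hw.le hρwB 2
      calc ρ w ^ 2 ≤ (30 * ρ ζ * τ ^ (1 - ε)) ^ 2 := h8
        _ = 900 * ρ ζ ^ 2 * (τ ^ (1 - ε)) ^ (2:ℕ) := by ring
        _ = 900 * ρ ζ ^ 2 * τ ^ (2 - 2 * ε) := by rw [h2]
    have hcancel : τ ^ p * τ ^ (2 - 2 * ε) = 1 := by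
      rw [← Real.rpow_add hτ0, hp]
      norm_num
    calc (π * ρ ζ ^ 2)⁻¹ * I ≤ (π * ρ ζ ^ 2)⁻¹ * (ε ^ 2 * π / 4 * τ ^ p) :=
          mul_le_mul_of_nonneg_left hIle (by positivity)
      _ = (π * ρ ζ ^ 2)⁻¹ * (ε ^ 2 / 4 * τ ^ p * π) := by ring
      _ = ε ^ 2 / 4 * τ ^ p / ρ ζ ^ 2 := AGBaux.inv_mul_helper _ hπ.ne' (pow_ne_zero 2 hζ.ne')
      _ ≤ C / ρ w ^ 2 := by
          rw [div_le_div_iff₀ (pow_pos hζ 2) (pow_pos hw 2)]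
          have h9 : 225 * ε ^ 2 ≤ C := by
            have hA2 : 16200 * ε ≤ C := by
              rw [le_div_iff₀ (by norm_num : (0:ℝ) < 16200)] at hεC
              linarith
            nlinarith
          calc ε ^ 2 / 4 * τ ^ p * ρ w ^ 2
              ≤ ε ^ 2 / 4 * τ ^ p * (900 * ρ ζ ^ 2 * τ ^ (2 - 2 * ε)) := by
                apply mul_le_mul_of_nonneg_left hsq (mul_nonneg (by positivity) hτpnn)
            _ = 225 * ε ^ 2 * ρ ζ ^ 2 * (τ ^ p * τ ^ (2 - 2 * ε)) := by ring
            _ = 225 * ε ^ 2 * ρ ζ ^ 2 := by rw [hcancel, mul_one]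
            _ = 225 * ε ^ 2 * ρ ζ ^ 2 := by ring
            _ ≤ C * ρ ζ ^ 2 := by
                have := mul_le_mul_of_nonneg_right h9 (sq_nonneg (ρ ζ))
                linarith [this]
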